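/- Let G be a finite set of C¹ diffeomorphisms of ℝ, closed under taking inverses, with every g ∈ G having everywhere positive derivative. Assume: (a) there is a constant C₀ ≥ 1 with 1/C₀ ≤ g'(y) ≤ C₀ for every g ∈ G and every y ∈ ℝ; (b) for every g ∈ G the function y ↦ log g'(y) is uniformly continuous on ℝ; (c) for every x ∈ ℝ the orbit { w(x) : w a word in G } is a bounded subset of ℝ. If there is no word Φ in G having a fixed point u ∈ ℝ with Φ'(u) < 1, then λ_*(x) = 0 for every x ∈ ℝ; that is, the hyperbolic set E⁺ = { x ∈ ℝ : λ_*(x) > 0 } is empty. -/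

import Mathlib

open MeasureTheory Filter Topology

/-- Composition of a list of maps: the list `[g_k, …, g₁]` composes to `g_k ∘ ⋯ ∘ g₁`
(the empty list gives the identity map). -/
def wordComp (w : List (ℝ → ℝ)) : ℝ → ℝ := w.foldr (· ∘ ·) id

/-- A word in `G` is a finite list of elements of `G`. -/
def IsWord (G : Finset (ℝ → ℝ)) (w : List (ℝ → ℝ)) : Prop := ∀ g ∈ w, g ∈ G

/-- The maximal `n`-expansion `μ_n(x)`. -/
noncomputable def maxExp (G : Finset (ℝ → ℝ)) (n : ℕ) (x : ℝ) : ℝ :=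
  sSup {d : ℝ | ∃ w : List (ℝ → ℝ), IsWord G w ∧ w.length ≤ n ∧ d = deriv (wordComp w) x}

/-- The transverse expansion exponent `λ_*(x) = limsup_n log(μ_n(x))/n`, in `[0,∞]`. -/
noncomputable def expExponent (G : Finset (ℝ → ℝ)) (x : ℝ) : ENNReal :=
  Filter.limsup (fun n : ℕ => ENNReal.ofReal (Real.log (maxExp G n x) / n)) Filter.atTop

def bw (g : ℕ → ℝ → ℝ) : ℕ → List (ℝ → ℝ)
  | 0 => []
  | (k+1) => g k :: bw g k

def orb (g : ℕ → ℝ → ℝ) (x : ℝ) : ℕ → ℝ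
  | 0 => x
  | (k+1) => g k (orb g x k)

lemma wordComp_cons (a : ℝ → ℝ) (w : List (ℝ → ℝ)) : wordComp (a :: w) = a ∘ wordComp w := rfl

lemma wordComp_bw (g : ℕ → ℝ → ℝ) (x : ℝ) (k : ℕ) : wordComp (bw g k) x = orb g x k := by
  induction k with
  | zero => simp [bw, orb, wordComp]
  | succ k ih => simp [bw, orb, wordComp_cons, ih]

lemma bw_isWord {G : Finset (ℝ → ℝ)} {g : ℕ → ℝ → ℝ} {k : ℕ} (h : ∀ i < k, g i ∈ G) :
    IsWord G (bw g k) := by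
  induction k with
  | zero => intro f hf; simp [bw] at hf
  | succ k ih =>
    intro f hf
    rcases List.mem_cons.mp hf with rfl | hf
    · exact h k (Nat.lt_succ_self k)
    · exact ih (fun i hi => h i (Nat.lt_succ_of_lt hi)) f hf

lemma hasDerivAt_bw (g : ℕ → ℝ → ℝ) (x : ℝ) (k : ℕ)
    (hd : ∀ i < k, Differentiable ℝ (g i)) :
    HasDerivAt (wordComp (bw g k)) (∏ i ∈ Finset.range k, deriv (g i) (orb g x i)) x := by
  induction k with
  | zero => simpa [bw, wordComp] using hasDerivAt_id x
  | succ k ih =>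
    have h1 := ih (fun i hi => hd i (Nat.lt_succ_of_lt hi))
    have h2 : HasDerivAt (g k) (deriv (g k) (orb g x k)) (wordComp (bw g k) x) := by
      rw [wordComp_bw]
      exact ((hd k (Nat.lt_succ_self k)) (orb g x k)).hasDerivAt
    have h3 := h2.comp x h1
    have : wordComp (bw g (k+1)) = g k ∘ wordComp (bw g k) := rfl
    rw [this, Finset.prod_range_succ, mul_comm]
    exact h3

lemma bw_congr {g g' : ℕ → ℝ → ℝ} {k : ℕ} (h : ∀ i < k, g i = g' i) : bw g k = bw g' k := by
  induction k with
  | zero => rfl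
  | succ k ih =>
    simp only [bw]
    rw [h k (Nat.lt_succ_self k), ih (fun i hi => h i (Nat.lt_succ_of_lt hi))]

lemma exists_bw (w : List (ℝ → ℝ)) :
    ∃ g : ℕ → ℝ → ℝ, bw g w.length = w ∧ ∀ i < w.length, g i ∈ w := by
  induction w with
  | nil => exact ⟨fun _ => id, rfl, by simp⟩
  | cons a t ih =>
    obtain ⟨g, hg, hmem⟩ := ih
    refine ⟨fun i => if i = t.length then a else g i, ?_, ?_⟩
    · show (if t.length = t.length then a else g t.length) :: bw _ t.length = a :: t
      rw [if_pos rfl]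
      congr 1
      calc bw (fun i => if i = t.length then a else g i) t.length
          = bw g t.length := bw_congr (fun i hi => if_neg (Nat.ne_of_lt hi))
        _ = t := hg
    · intro i hi
      by_cases h : i = t.length
      · simp [h]
      · have : i < t.length := by
          simp only [List.length_cons] at hi; omega
        simp only [if_neg h]
        exact List.mem_cons_of_mem a (hmem i this)

lemma pliss (k : ℕ) (b : ℕ → ℝ) (A lam : ℝ) (hA : 0 < A) (hlam : 0 < lam)
    (hb : ∀ i < k, b i ≤ A)
    (hsum : (k : ℝ) * lam ≤ ∑ i ∈ Finset.range k, b i) :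
    ∃ P : Finset ℕ, P ⊆ Finset.range (k+1) ∧ (k : ℝ) * lam / 2 ≤ A * P.card ∧
      ∀ j ∈ P, ∀ m ≤ j, ((j - m : ℕ) : ℝ) * (lam/2) ≤ ∑ l ∈ Finset.Ico m j, b l := by
  classical
  set S : ℕ → ℝ := fun j => ∑ l ∈ Finset.range j, (b l - lam/2) with hSdef
  set Q : ℕ → Prop := fun j => ∀ m ≤ j, S m ≤ S j with hQdef
  set P : Finset ℕ := (Finset.range (k+1)).filter Q with hPdef
  have hSsucc : ∀ j, S (j+1) = S j + (b j - lam/2) := fun j => Finset.sum_range_succ _ j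
  -- the running max M
  set M : ℕ → ℝ := fun j => Nat.rec (S 0) (fun n ih => S (n+1) ⊔ ih) j with hMdef
  have hMsucc : ∀ j, M (j+1) = S (j+1) ⊔ M j := fun j => rfl
  have hSleM : ∀ j, S j ≤ M j := by
    intro j
    induction j with
    | zero => exact le_rfl
    | succ j ih => rw [hMsucc]; exact le_sup_left
  have hMle : ∀ m j, m ≤ j → S m ≤ M j := by
    intro m j hmj
    induction j with
    | zero => have : m = 0 := by omega
              rw [this]; exact hSleM 0
    | succ j ih =>
      rcases Nat.lt_or_ge m (j+1) with h | h
      · rw [hMsucc]; exact le_trans (ih (by omega)) le_sup_right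
      · have : m = j + 1 := by omega
        rw [this]; exact hSleM (j+1)
  have hcount : ∀ j ≤ k, M j ≤ A * ((Finset.range (j+1)).filter Q).card := by
    intro j
    induction j with
    | zero =>
      intro _
      have h0 : M 0 = S 0 := rfl
      have hQ0 : Q 0 := by intro m hm; interval_cases m; exact le_rfl
      have : (0:ℕ) ∈ (Finset.range 1).filter Q :=
        Finset.mem_filter.mpr ⟨by simp, hQ0⟩
      have hc : 1 ≤ ((Finset.range 1).filter Q).card := Finset.card_pos.mpr ⟨0, this⟩
      have : S 0 = 0 := by simp [hSdef]
      rw [h0, this]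
      positivity
    | succ j ih =>
      intro hjk
      have hjk' : j ≤ k := Nat.le_of_succ_le hjk
      have ihj := ih hjk'
      have hfilter : (Finset.range (j+2)).filter Q =
          if Q (j+1) then insert (j+1) ((Finset.range (j+1)).filter Q)
          else (Finset.range (j+1)).filter Q := by
        rw [Finset.range_add_one, Finset.filter_insert]
      by_cases hq : Q (j+1)
      · have hcard : ((Finset.range (j+2)).filter Q).card
            = ((Finset.range (j+1)).filter Q).card + 1 := by
          rw [hfilter, if_pos hq, Finset.card_insert_of_notMem]
          intro hmem
          have := Finset.mem_of_mem_filter _ hmem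
          simp at this
        have hbj : b j ≤ A := hb j (by omega)
        have h1 : S (j+1) ≤ M j + A := by
          have := hSleM j
          rw [hSsucc j]; linarith
        have h2 : M (j+1) ≤ M j + A := by
          rw [hMsucc j]
          exact sup_le h1 (by linarith)
        rw [hcard]
        push_cast
        linarith
      · -- not a record
        have hex : ∃ m ≤ j + 1, ¬ S m ≤ S (j+1) := by
          by_contra hcon
          push_neg at hcon
          exact hq (fun m hm => hcon m hm)
        obtain ⟨m, hm, hSm⟩ := hex
        push_neg at hSm
        have hmj : m ≤ j := by
          rcases Nat.lt_or_ge m (j+1) with h | h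
          · omega
          · exfalso; have : m = j + 1 := by omega
            rw [this] at hSm; exact lt_irrefl _ hSm
        have hSM : S (j+1) ≤ M j := le_trans hSm.le (hMle m j hmj)
        have hM : M (j+1) = M j := by
          rw [hMsucc j]; exact sup_eq_right.mpr hSM
        have hcard : ((Finset.range (j+2)).filter Q).card
            = ((Finset.range (j+1)).filter Q).card := by
          rw [hfilter, if_neg hq]
        rw [hM, hcard]
        exact ihj
  refine ⟨P, Finset.filter_subset _ _, ?_, ?_⟩
  · have hSk : (k:ℝ) * lam / 2 ≤ S k := by
      have : S k = (∑ l ∈ Finset.range k, b l) - k * (lam/2) := by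
        rw [hSdef]
        simp only [Finset.sum_sub_distrib, Finset.sum_const, Finset.card_range, nsmul_eq_mul]
      rw [this]; linarith
    have h1 : S k ≤ M k := hSleM k
    have h2 := hcount k le_rfl
    have h3 : ((Finset.range (k+1)).filter Q) = P := rfl
    rw [h3] at h2
    linarith
  · intro j hj m hm
    have hQj : Q j := (Finset.mem_filter.mp hj).2
    have h1 : S m ≤ S j := hQj m hm
    have h2 : ∑ l ∈ Finset.Ico m j, (b l - lam/2) = S j - S m :=
      Finset.sum_Ico_eq_sub _ hm
    have h3 : ∑ l ∈ Finset.Ico m j, (b l - lam/2)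
        = (∑ l ∈ Finset.Ico m j, b l) - ((j - m : ℕ) : ℝ) * (lam/2) := by
      rw [Finset.sum_sub_distrib, Finset.sum_const, Nat.card_Ico, nsmul_eq_mul]
    rw [h3] at h2
    linarith

lemma uc_finset (ε : ℝ) (hε : 0 < ε) (G : Finset (ℝ → ℝ)) :
    (∀ g ∈ G, UniformContinuous fun y : ℝ => Real.log (deriv g y)) →
    ∃ δ : ℝ, 0 < δ ∧ ∀ g ∈ G, ∀ y z : ℝ, |y - z| ≤ δ →
      |Real.log (deriv g y) - Real.log (deriv g z)| ≤ ε := by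
  classical
  induction G using Finset.induction_on with
  | empty => exact fun _ => ⟨1, one_pos, by simp⟩
  | @insert a s ha ih =>
    intro hUC
    obtain ⟨δ₁, hδ₁, h₁⟩ := ih (fun g hg => hUC g (Finset.mem_insert_of_mem hg))
    obtain ⟨δ₂, hδ₂, h₂⟩ := Metric.uniformContinuous_iff.mp
      (hUC a (Finset.mem_insert_self a s)) ε hε
    refine ⟨min δ₁ (δ₂/2), by positivity, ?_⟩
    intro g hg y z hyz
    rcases Finset.mem_insert.mp hg with rfl | hg
    · have hd : dist y z < δ₂ := by
        rw [Real.dist_eq]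
        calc |y - z| ≤ min δ₁ (δ₂/2) := hyz
          _ ≤ δ₂/2 := min_le_right _ _
          _ < δ₂ := by linarith
      have := h₂ hd
      rw [Real.dist_eq] at this
      exact this.le
    · exact h₁ g hg y z (le_trans hyz (min_le_left _ _))

lemma mvt_bound (f : ℝ → ℝ) (hf : Differentiable ℝ f) (p q C : ℝ) (hC0 : 0 ≤ C)
    (hC : ∀ z ∈ Set.uIcc p q, |deriv f z| ≤ C) : |f p - f q| ≤ C * |p - q| := by
  have hcv : Convex ℝ (Set.uIcc p q) := by
    rw [Set.uIcc]; exact convex_Icc _ _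
  have := hcv.norm_image_sub_le_of_norm_deriv_le
    (f := f) (fun z _ => hf z) (fun z hz => by rw [Real.norm_eq_abs]; exact hC z hz)
    (Set.right_mem_uIcc) (Set.left_mem_uIcc)
  simpa [Real.norm_eq_abs] using this

lemma deriv_inv_comp (g h : ℝ → ℝ) (hg : Differentiable ℝ g) (hh : Differentiable ℝ h)
    (hid : ∀ x, h (g x) = x) (x : ℝ) : deriv h (g x) * deriv g x = 1 := by
  have h1 : HasDerivAt (h ∘ g) (deriv h (g x) * deriv g x) x :=
    ((hh (g x)).hasDerivAt).comp x ((hg x).hasDerivAt)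
  have h2 : (h ∘ g) = id := funext hid
  rw [h2] at h1
  exact h1.unique (hasDerivAt_id x)

lemma abs_lt_of_floor_div_eq {y z ε : ℝ} (hε : 0 < ε) (h : ⌊y/ε⌋ = ⌊z/ε⌋) : |y - z| < ε := by
  have h1 : |y/ε - z/ε| < 1 := by
    have a1 := Int.floor_le (y/ε)
    have a2 := Int.lt_floor_add_one (y/ε)
    have a3 := Int.floor_le (z/ε)
    have a4 := Int.lt_floor_add_one (z/ε)
    rw [h] at a1 a2
    rw [abs_lt]
    constructor <;> linarith
  have h2 : y - z = ε * (y/ε - z/ε) := by field_simp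
  rw [h2, abs_mul, abs_of_pos hε]
  calc ε * |y/ε - z/ε| < ε * 1 := by apply mul_lt_mul_of_pos_left h1 hε
    _ = ε := mul_one ε

lemma abs_sub_le_of_mem_uIcc {z a b : ℝ} (hz : z ∈ Set.uIcc a b) : |z - b| ≤ |a - b| := by
  rcases Set.mem_uIcc.mp hz with ⟨h1, h2⟩ | ⟨h1, h2⟩ <;>
  · rw [abs_sub_le_iff]
    constructor <;> linarith [le_abs_self (a-b), neg_le_abs (a-b), abs_nonneg (a-b)]

lemma sum_reflect' (b : ℕ → ℝ) (j t : ℕ) (ht : t ≤ j) :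
    ∑ s ∈ Finset.range t, b (j - 1 - s) = ∑ l ∈ Finset.Ico (j - t) j, b l := by
  refine Finset.sum_nbij' (fun s => j - 1 - s) (fun l => j - 1 - l) ?_ ?_ ?_ ?_ ?_ <;>
    intros <;> simp_all [Finset.mem_range, Finset.mem_Ico] <;> omega

set_option maxHeartbeats 2000000 in
/-- If no word of `G` has a hyperbolic (attracting) fixed point, then the hyperbolic
set `E⁺ = {x | λ_*(x) > 0}` is empty, i.e. `λ_*(x) = 0` for every `x`. -/
theorem no_hyperbolic_fixed_point_implies_hyperbolic_set_empty
    (G : Finset (ℝ → ℝ))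
    (hC1 : ∀ g ∈ G, ContDiff ℝ 1 g)
    (hpos : ∀ g ∈ G, ∀ y : ℝ, 0 < deriv g y)
    (hinv : ∀ g ∈ G, ∃ h ∈ G, (∀ x : ℝ, h (g x) = x) ∧ (∀ x : ℝ, g (h x) = x))
    (C₀ : ℝ) (hC₀ : 1 ≤ C₀)
    (hbound : ∀ g ∈ G, ∀ y : ℝ, 1 / C₀ ≤ deriv g y ∧ deriv g y ≤ C₀)
    (hUC : ∀ g ∈ G, UniformContinuous fun y : ℝ => Real.log (deriv g y))
    (hbddorbit : ∀ x : ℝ,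
      Bornology.IsBounded {y : ℝ | ∃ w : List (ℝ → ℝ), IsWord G w ∧ y = wordComp w x})
    (hnofix : ¬ ∃ (Φ : List (ℝ → ℝ)) (u : ℝ), IsWord G Φ ∧ wordComp Φ u = u ∧
      deriv (wordComp Φ) u < 1) :
    ∀ x : ℝ, expExponent G x = 0 := by
  classical
  have hdiff : ∀ g ∈ G, Differentiable ℝ g := fun g hg => (hC1 g hg).differentiable one_ne_zero
  choose! Finv hFmem hFleft hFright using hinv
  intro x
  by_contra hne
  have hpos0 : 0 < expExponent G x := pos_iff_ne_zero.mpr hne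
  obtain ⟨lam, _hlam0', hlam1, hlam2⟩ := ENNReal.lt_iff_exists_real_btwn.mp hpos0
  have hlam0 : 0 < lam := ENNReal.ofReal_pos.mp hlam1
  have hfreq : ∃ᶠ n in atTop, ENNReal.ofReal lam <
      ENNReal.ofReal (Real.log (maxExp G n x) / n) :=
    Filter.frequently_lt_of_lt_limsup (by isBoundedDefault) hlam2
  obtain ⟨M₀, hM₀⟩ : ∃ M₀ : ℝ, ∀ w : List (ℝ → ℝ), IsWord G w → |wordComp w x| ≤ M₀ := by
    obtain ⟨Rb, hRb⟩ := (hbddorbit x).subset_closedBall 0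
    refine ⟨Rb, fun w hw => ?_⟩
    have : wordComp w x ∈ Metric.closedBall 0 Rb := hRb ⟨w, hw, rfl⟩
    simpa [Real.dist_eq] using this
  have hSetNe : ∀ n : ℕ, (1:ℝ) ∈ {d : ℝ | ∃ w : List (ℝ → ℝ),
      IsWord G w ∧ w.length ≤ n ∧ d = deriv (wordComp w) x} := by
    intro n
    refine ⟨[], fun g hg => absurd hg List.not_mem_nil, Nat.zero_le n, ?_⟩
    show (1:ℝ) = deriv id x
    simp
  have hderiv_formula : ∀ w : List (ℝ → ℝ), IsWord G w → ∀ y : ℝ,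
      ∃ g : ℕ → ℝ → ℝ, (∀ i < w.length, g i ∈ G) ∧
        deriv (wordComp w) y = ∏ i ∈ Finset.range w.length, deriv (g i) (orb g y i) := by
    intro w hw y
    obtain ⟨g, hbwg, hmem⟩ := exists_bw w
    refine ⟨g, fun i hi => hw _ (hmem i hi), ?_⟩
    conv_lhs => rw [← hbwg]
    exact (hasDerivAt_bw g y w.length (fun i hi => hdiff _ (hw _ (hmem i hi)))).deriv
  have hword_le : ∀ w : List (ℝ → ℝ), IsWord G w → ∀ y : ℝ,
      deriv (wordComp w) y ≤ C₀ ^ w.length := by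
    intro w hw y
    obtain ⟨g, hgG, hform⟩ := hderiv_formula w hw y
    rw [hform]
    calc ∏ i ∈ Finset.range w.length, deriv (g i) (orb g y i)
        ≤ ∏ _i ∈ Finset.range w.length, C₀ := by
          apply Finset.prod_le_prod
          · intro i hi; exact (hpos _ (hgG i (Finset.mem_range.mp hi)) _).le
          · intro i hi; exact (hbound _ (hgG i (Finset.mem_range.mp hi)) _).2
      _ = C₀ ^ w.length := by rw [Finset.prod_const, Finset.card_range]
  have hbdd : ∀ n : ℕ, BddAbove {d : ℝ | ∃ w : List (ℝ → ℝ),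
      IsWord G w ∧ w.length ≤ n ∧ d = deriv (wordComp w) x} := by
    intro n
    refine ⟨C₀ ^ n, fun d hd => ?_⟩
    obtain ⟨w, hw, hlen, rfl⟩ := hd
    exact le_trans (hword_le w hw x) (pow_le_pow_right₀ hC₀ hlen)
  have hone_le : ∀ n : ℕ, 1 ≤ maxExp G n x := fun n => le_csSup (hbdd n) (hSetNe n)
  set A : ℝ := Real.log C₀ + 1 with hAdef
  have hlogC₀ : 0 ≤ Real.log C₀ := Real.log_nonneg hC₀
  have hA0 : 0 < A := by rw [hAdef]; linarith
  obtain ⟨δ, hδ0, hδ⟩ := uc_finset (lam/100) (by positivity) G hUC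
  set δ₀ : ℝ := min δ 1 with hδ₀def
  have hδ₀0 : 0 < δ₀ := lt_min hδ0 one_pos
  have hδ₀δ : δ₀ ≤ δ := min_le_left _ _
  set R : ℕ := ⌈(4:ℝ)/lam⌉₊ + 1 with hRdef
  have hR0 : 0 < R := Nat.succ_pos _
  set ε : ℝ := δ₀ / 2 with hεdef
  have hε0 : 0 < ε := by rw [hεdef]; positivity
  set lo : ℤ := ⌊-M₀/ε⌋ with hlodef
  set hi : ℤ := ⌊M₀/ε⌋ with hhidef
  set N : ℕ := (Finset.Icc lo hi).card with hNdef
  set K₀ : ℝ := 2*A*(((N*R : ℕ) : ℝ) + 1)/lam with hK₀def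
  have hK₀0 : 0 < K₀ := by
    rw [hK₀def]
    have : (0:ℝ) ≤ ((N*R : ℕ) : ℝ) := Nat.cast_nonneg _
    positivity
  obtain ⟨n, hn_ge, hnlt⟩ := frequently_atTop.mp hfreq (⌈K₀*A/lam⌉₊ + 1)
  have hn1 : 1 ≤ n := le_trans (Nat.succ_le_succ (Nat.zero_le _)) hn_ge
  have hlt' : lam < Real.log (maxExp G n x) / n := by
    by_contra hcon
    push_neg at hcon
    exact absurd (ENNReal.ofReal_le_ofReal hcon) (not_le.mpr hnlt)
  have hnpos : (0:ℝ) < n := by exact_mod_cast hn1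
  have hlog : (n:ℝ) * lam < Real.log (maxExp G n x) := by
    have := (lt_div_iff₀ hnpos).mp hlt'
    linarith
  have hμpos : (0:ℝ) < maxExp G n x := lt_of_lt_of_le zero_lt_one (hone_le n)
  have hexp_lt : Real.exp ((n:ℝ)*lam) < maxExp G n x := by
    have := Real.exp_lt_exp.mpr hlog
    rwa [Real.exp_log hμpos] at this
  obtain ⟨d, hd_mem, hd_gt⟩ := exists_lt_of_lt_csSup ⟨1, hSetNe n⟩ hexp_lt
  obtain ⟨w, hw, hwlen, rfl⟩ := hd_mem
  set k := w.length with hkdef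
  obtain ⟨g, hgG, hform⟩ := hderiv_formula w hw x
  set X : ℕ → ℝ := orb g x with hXdef
  set b : ℕ → ℝ := fun m => Real.log (deriv (g m) (X m)) with hbdef
  have hXmem : ∀ m ≤ k, |X m| ≤ M₀ := by
    intro m hm
    have h1 : X m = wordComp (bw g m) x := (wordComp_bw g x m).symm
    rw [h1]
    exact hM₀ _ (bw_isWord (fun i hi => hgG i (lt_of_lt_of_le hi hm)))
  have hbposD : ∀ m, 0 < deriv (g m) (X m) → True := fun _ _ => trivial
  have hDpos : ∀ m < k, 0 < deriv (g m) (X m) := fun m hm => hpos _ (hgG m hm) _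
  have hble : ∀ m < k, b m ≤ A := by
    intro m hm
    have h1 : deriv (g m) (X m) ≤ C₀ := (hbound _ (hgG m hm) _).2
    have h2 : Real.log (deriv (g m) (X m)) ≤ Real.log C₀ :=
      Real.log_le_log (hDpos m hm) h1
    rw [hAdef]
    simp only [hbdef]
    linarith
  have hsum_b : Real.log (deriv (wordComp w) x) = ∑ m ∈ Finset.range k, b m := by
    rw [hform]
    exact Real.log_prod (fun m hm => (hDpos m (Finset.mem_range.mp hm)).ne')
  have hsum_ge : (k:ℝ) * lam ≤ ∑ m ∈ Finset.range k, b m := by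
    rw [← hsum_b]
    have h1 : (n:ℝ)*lam ≤ Real.log (deriv (wordComp w) x) := by
      have := Real.log_le_log (Real.exp_pos _) hd_gt.le
      rwa [Real.log_exp] at this
    have h2 : (k:ℝ) ≤ (n:ℝ) := by exact_mod_cast hwlen
    nlinarith [hlam0]
  have hkA : (n:ℝ) * lam < (k:ℝ) * A := by
    have h1 : Real.exp ((n:ℝ)*lam) < C₀ ^ k := lt_of_lt_of_le hd_gt (hword_le w hw x)
    have h2 : (n:ℝ)*lam < Real.log (C₀ ^ k) := by
      have := Real.log_lt_log (Real.exp_pos _) h1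
      rwa [Real.log_exp] at this
    rw [Real.log_pow] at h2
    have h3 : (k:ℝ) * Real.log C₀ ≤ (k:ℝ) * A := by
      apply mul_le_mul_of_nonneg_left _ (Nat.cast_nonneg k)
      rw [hAdef]; linarith
    push_cast at h2 ⊢
    linarith
  have hkK₀ : K₀ < (k:ℝ) := by
    have hn' : K₀ * A / lam < (n:ℝ) := by
      have h1 : (⌈K₀*A/lam⌉₊ : ℝ) < (n:ℝ) := by
        exact_mod_cast lt_of_lt_of_le (Nat.lt_succ_self _) hn_ge
      exact lt_of_le_of_lt (Nat.le_ceil _) h1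
    have h1 : K₀ * A < (n:ℝ) * lam := by
      rw [div_lt_iff₀ hlam0] at hn'
      linarith
    have h2 : K₀ * A < (k:ℝ) * A := lt_trans h1 hkA
    exact (mul_lt_mul_iff_left₀ hA0).mp h2
  obtain ⟨P, hPsub, hPcard, hPslope⟩ := pliss k b A lam hA0 hlam0 hble hsum_ge
  have hPcard' : N * R < P.card := by
    have h1 : 2*A*(((N*R : ℕ) : ℝ) + 1) < (k:ℝ)*lam := by
      rw [hK₀def, div_lt_iff₀ hlam0] at hkK₀
      linarith
    have h2 : A * (((N*R:ℕ):ℝ)) < A * P.card := by nlinarith [hPcard, hA0]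
    have h3 : ((N*R:ℕ):ℝ) < (P.card : ℝ) := (mul_lt_mul_iff_right₀ hA0).mp h2
    exact_mod_cast h3
  set φ : ℕ → ℤ × ℕ := fun m => (⌊X m / ε⌋, m % R) with hφdef
  have hmaps : ∀ m ∈ P, φ m ∈ (Finset.Icc lo hi) ×ˢ (Finset.range R) := by
    intro m hm
    have hmk : m ≤ k := Nat.lt_succ_iff.mp (Finset.mem_range.mp (hPsub hm))
    have hXm := hXmem m hmk
    rw [Finset.mem_product]
    constructor
    · rw [Finset.mem_Icc]
      have h1 : -M₀ ≤ X m := (abs_le.mp hXm).1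
      have h2 : X m ≤ M₀ := (abs_le.mp hXm).2
      exact ⟨Int.floor_le_floor ((div_le_div_iff_of_pos_right hε0).mpr h1),
             Int.floor_le_floor ((div_le_div_iff_of_pos_right hε0).mpr h2)⟩
    · exact Finset.mem_range.mpr (Nat.mod_lt m hR0)
  have hTcard : ((Finset.Icc lo hi) ×ˢ (Finset.range R)).card = N * R := by
    rw [Finset.card_product, Finset.card_range]
  obtain ⟨i0, hi0, j0, hj0, hne0, hφeq⟩ :=
    Finset.exists_ne_map_eq_of_card_lt_of_maps_to (by rw [hTcard]; exact hPcard') hmaps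
  obtain ⟨i, j, hiP, hjP, hij, hφij⟩ : ∃ i j, i ∈ P ∧ j ∈ P ∧ i < j ∧ φ i = φ j := by
    rcases hne0.lt_or_gt with h | h
    · exact ⟨i0, j0, hi0, hj0, h, hφeq⟩
    · exact ⟨j0, i0, hj0, hi0, h, hφeq.symm⟩
  have hik : i ≤ k := Nat.lt_succ_iff.mp (Finset.mem_range.mp (hPsub hiP))
  have hjk : j ≤ k := Nat.lt_succ_iff.mp (Finset.mem_range.mp (hPsub hjP))
  have hfloor : ⌊X i / ε⌋ = ⌊X j / ε⌋ := congrArg Prod.fst hφij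
  have hmod : i % R = j % R := congrArg Prod.snd hφij
  have hXij : |X i - X j| < ε := abs_lt_of_floor_div_eq hε0 hfloor
  have hRr : R ≤ j - i := by
    have hdvd : R ∣ j - i := (Nat.modEq_iff_dvd' hij.le).mp hmod
    exact Nat.le_of_dvd (by omega) hdvd
  set r : ℕ := j - i with hrdef
  have hr1 : 1 ≤ r := le_trans hR0 hRr
  have hrj : r ≤ j := Nat.sub_le j i
  set F : ℕ → ℝ → ℝ := fun t => Finv (g (j - 1 - t)) with hFdef
  set Z : ℕ → ℝ := fun t => X (j - t) with hZdef
  have hidx : ∀ t < r, j - 1 - t < k := by intro t ht; omega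
  have hgmem : ∀ t < r, g (j - 1 - t) ∈ G := fun t ht => hgG _ (hidx t ht)
  have hFmem' : ∀ t < r, F t ∈ G := fun t ht => hFmem _ (hgmem t ht)
  have hFdiff : ∀ t < r, Differentiable ℝ (F t) := fun t ht => hdiff _ (hFmem' t ht)
  have hZeq : ∀ t < r, Z t = g (j-1-t) (X (j-1-t)) := by
    intro t ht
    show X (j - t) = g (j-1-t) (X (j-1-t))
    have h1 : j - t = (j - 1 - t) + 1 := by omega
    rw [h1]
    rfl
  have hZsucc : ∀ t < r, Z (t+1) = F t (Z t) := by
    intro t ht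
    have h1 : F t (Z t) = X (j-1-t) := by
      rw [hZeq t ht]
      exact hFleft _ (hgmem t ht) _
    rw [h1]
    show X (j - (t+1)) = X (j-1-t)
    congr 1
    omega
  have hFderiv : ∀ t < r, deriv (F t) (Z t) = (deriv (g (j-1-t)) (X (j-1-t)))⁻¹ := by
    intro t ht
    have h1 := deriv_inv_comp (g (j-1-t)) (F t) (hdiff _ (hgmem t ht)) (hFdiff t ht)
      (hFleft _ (hgmem t ht)) (X (j-1-t))
    rw [← hZeq t ht] at h1
    exact eq_inv_of_mul_eq_one_left h1
  have hderivFpos : ∀ t < r, 0 < deriv (F t) (Z t) := fun t ht => hpos _ (hFmem' t ht) _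
  have hprodZ : ∀ t ≤ r, (∏ s ∈ Finset.range t, deriv (F s) (Z s))
      ≤ Real.exp (-((t:ℝ) * (lam/2))) := by
    intro t ht
    have hppos : 0 < ∏ s ∈ Finset.range t, deriv (F s) (Z s) :=
      Finset.prod_pos (fun s hs => hderivFpos s (lt_of_lt_of_le (Finset.mem_range.mp hs) ht))
    rw [← Real.exp_log hppos]
    apply Real.exp_le_exp.mpr
    rw [Real.log_prod
      (fun s hs => (hderivFpos s (lt_of_lt_of_le (Finset.mem_range.mp hs) ht)).ne')]
    have h1 : ∑ s ∈ Finset.range t, Real.log (deriv (F s) (Z s))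
        = - ∑ s ∈ Finset.range t, b (j-1-s) := by
      rw [← Finset.sum_neg_distrib]
      apply Finset.sum_congr rfl
      intro s hs
      rw [hFderiv s (lt_of_lt_of_le (Finset.mem_range.mp hs) ht), Real.log_inv]
    rw [h1, sum_reflect' b j t (le_trans ht hrj)]
    have h2 := hPslope j hjP (j - t) (Nat.sub_le j t)
    have h3 : ((j - (j - t) : ℕ) : ℝ) = (t : ℝ) := by
      congr 1
      omega
    rw [h3] at h2
    linarith
  have hUCstep : ∀ f ∈ G, ∀ y z : ℝ, |y - z| ≤ δ →
      deriv f y ≤ deriv f z * Real.exp (lam/100) := by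
    intro f hf y z h
    have h1 := hδ f hf y z h
    have h2 : Real.log (deriv f y) ≤ Real.log (deriv f z) + lam/100 := by
      have h3 := abs_le.mp h1
      linarith [h3.1, h3.2]
    calc deriv f y = Real.exp (Real.log (deriv f y)) := (Real.exp_log (hpos f hf y)).symm
      _ ≤ Real.exp (Real.log (deriv f z) + lam/100) := Real.exp_le_exp.mpr h2
      _ = deriv f z * Real.exp (lam/100) := by rw [Real.exp_add, Real.exp_log (hpos f hf z)]
  have hcomb : ∀ t, t ≤ r →
      δ₀ * Real.exp ((t:ℝ)*(lam/100)) * (∏ s ∈ Finset.range t, deriv (F s) (Z s))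
        ≤ δ₀ * Real.exp ((t:ℝ)*(lam/100) - (t:ℝ)*(lam/2)) := by
    intro t ht
    have h1 := hprodZ t ht
    have h2 : (0:ℝ) < δ₀ * Real.exp ((t:ℝ)*(lam/100)) := by positivity
    calc δ₀ * Real.exp ((t:ℝ)*(lam/100)) * (∏ s ∈ Finset.range t, deriv (F s) (Z s))
        ≤ δ₀ * Real.exp ((t:ℝ)*(lam/100)) * Real.exp (-((t:ℝ)*(lam/2))) :=
          mul_le_mul_of_nonneg_left h1 h2.le
      _ = δ₀ * Real.exp ((t:ℝ)*(lam/100) - (t:ℝ)*(lam/2)) := by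
          rw [mul_assoc, ← Real.exp_add]
          ring_nf
  have hcomb' : ∀ t, t ≤ r →
      δ₀ * Real.exp ((t:ℝ)*(lam/100)) * (∏ s ∈ Finset.range t, deriv (F s) (Z s)) ≤ δ₀ := by
    intro t ht
    refine le_trans (hcomb t ht) ?_
    have h1 : Real.exp ((t:ℝ)*(lam/100) - (t:ℝ)*(lam/2)) ≤ 1 := by
      rw [Real.exp_le_one_iff]
      nlinarith [Nat.cast_nonneg (α := ℝ) t, hlam0]
    nlinarith [hδ₀0]
  have claim : ∀ y : ℝ, |y - Z 0| ≤ δ₀ → ∀ t, t ≤ r →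
      |orb F y t - Z t| ≤ δ₀ * Real.exp ((t:ℝ)*(lam/100)) *
        (∏ s ∈ Finset.range t, deriv (F s) (Z s)) := by
    intro y hy t
    induction t with
    | zero => intro _; simpa [orb] using hy
    | succ t ih =>
      intro ht
      have htr : t < r := ht
      have ht' : t ≤ r := le_of_lt htr
      have hb1 := ih ht'
      have hsmall : |orb F y t - Z t| ≤ δ₀ := le_trans hb1 (hcomb' t ht')
      have hδsmall : |orb F y t - Z t| ≤ δ := le_trans hsmall hδ₀δ
      set C : ℝ := deriv (F t) (Z t) * Real.exp (lam/100) with hCdef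
      have hC0 : 0 ≤ C := mul_nonneg (hderivFpos t htr).le (Real.exp_pos _).le
      have hstep : |F t (orb F y t) - F t (Z t)| ≤ C * |orb F y t - Z t| := by
        apply mvt_bound (F t) (hFdiff t htr) _ _ C hC0
        intro z hz
        have hz' : |z - Z t| ≤ δ := le_trans (abs_sub_le_of_mem_uIcc hz) hδsmall
        rw [abs_of_pos (hpos _ (hFmem' t htr) z)]
        exact hUCstep _ (hFmem' t htr) z (Z t) hz'
      have horb : orb F y (t+1) = F t (orb F y t) := rfl
      rw [← horb, ← hZsucc t htr] at hstep
      calc |orb F y (t+1) - Z (t+1)| ≤ C * |orb F y t - Z t| := hstep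
        _ ≤ C * (δ₀ * Real.exp ((t:ℝ)*(lam/100)) * ∏ s ∈ Finset.range t, deriv (F s) (Z s)) :=
            mul_le_mul_of_nonneg_left hb1 hC0
        _ = δ₀ * Real.exp (((t+1:ℕ):ℝ)*(lam/100)) *
            ∏ s ∈ Finset.range (t+1), deriv (F s) (Z s) := by
            rw [Finset.prod_range_succ, hCdef]
            push_cast
            rw [add_mul, one_mul, Real.exp_add]
            ring
  have hhalf : ∀ y : ℝ, |y - Z 0| ≤ δ₀ → |orb F y r - Z r| ≤ δ₀ / 2 := by
    intro y hy
    have h1 := le_trans (claim y hy r le_rfl) (hcomb r le_rfl)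
    have hr4 : (1:ℝ) ≤ (r:ℝ) * (lam/4) := by
      have hR4 : (4:ℝ)/lam ≤ (R:ℝ) := by
        calc (4:ℝ)/lam ≤ (⌈(4:ℝ)/lam⌉₊ : ℝ) := Nat.le_ceil _
          _ ≤ (R:ℝ) := by rw [hRdef]; push_cast; linarith
      have hrR : (R:ℝ) ≤ (r:ℝ) := by exact_mod_cast hRr
      rw [div_le_iff₀ hlam0] at hR4
      nlinarith
    have h2 : Real.exp ((r:ℝ)*(lam/100) - (r:ℝ)*(lam/2)) ≤ Real.exp (-(1:ℝ)) := by
      apply Real.exp_le_exp.mpr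
      nlinarith [Nat.cast_nonneg (α := ℝ) r]
    have h3 : Real.exp (-(1:ℝ)) ≤ 1/2 := by
      rw [Real.exp_neg]
      have h2e : (2:ℝ) ≤ Real.exp 1 := by
        have := Real.add_one_le_exp 1
        linarith
      calc (Real.exp 1)⁻¹ ≤ (2:ℝ)⁻¹ := inv_anti₀ (by norm_num) h2e
        _ = 1/2 := by norm_num
    calc |orb F y r - Z r| ≤ δ₀ * Real.exp ((r:ℝ)*(lam/100) - (r:ℝ)*(lam/2)) := h1
      _ ≤ δ₀ * (1/2) := mul_le_mul_of_nonneg_left (le_trans h2 h3) hδ₀0.le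
      _ = δ₀/2 := by ring
  set Ψ : List (ℝ → ℝ) := bw F r with hΨdef
  have hΨword : IsWord G Ψ := bw_isWord hFmem'
  have hΨval : ∀ y, wordComp Ψ y = orb F y r := fun y => wordComp_bw F y r
  have hΨderiv : ∀ y : ℝ, HasDerivAt (wordComp Ψ)
      (∏ s ∈ Finset.range r, deriv (F s) (orb F y s)) y :=
    fun y => hasDerivAt_bw F y r hFdiff
  have hcont : Continuous (fun y => wordComp Ψ y - y) := by
    have h1 : Differentiable ℝ (wordComp Ψ) := fun y => (hΨderiv y).differentiableAt
    exact h1.continuous.sub continuous_id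
  have hZr0 : |Z r - Z 0| < δ₀/2 := by
    have h1 : Z r = X i := by
      show X (j - r) = X i
      congr 1
      omega
    have h2 : Z 0 = X j := by
      show X (j - 0) = X j
      congr 1
    rw [h1, h2]
    rw [hεdef] at hXij
    exact hXij
  have hmapsI : ∀ y : ℝ, |y - Z 0| ≤ δ₀ → |wordComp Ψ y - Z 0| ≤ δ₀ := by
    intro y hy
    rw [hΨval]
    have h1 := hhalf y hy
    calc |orb F y r - Z 0| ≤ |orb F y r - Z r| + |Z r - Z 0| := abs_sub_le _ _ _
      _ ≤ δ₀/2 + δ₀/2 := by linarith [hZr0]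
      _ = δ₀ := by ring
  obtain ⟨u, huI, hufix⟩ : ∃ u ∈ Set.Icc (Z 0 - δ₀) (Z 0 + δ₀), wordComp Ψ u - u = 0 := by
    have hab : Z 0 - δ₀ ≤ Z 0 + δ₀ := by linarith
    have hivt := intermediate_value_Icc' hab hcont.continuousOn
    have hleft : 0 ≤ wordComp Ψ (Z 0 - δ₀) - (Z 0 - δ₀) := by
      have := hmapsI (Z 0 - δ₀) (by rw [abs_of_nonpos (by linarith)]; linarith)
      have h4 := (abs_le.mp this).1
      linarith
    have hright : wordComp Ψ (Z 0 + δ₀) - (Z 0 + δ₀) ≤ 0 := by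
      have := hmapsI (Z 0 + δ₀) (by rw [abs_of_nonneg (by linarith)]; linarith)
      have h4 := (abs_le.mp this).2
      linarith
    have hmem : (0:ℝ) ∈ Set.Icc ((fun y => wordComp Ψ y - y) (Z 0 + δ₀))
        ((fun y => wordComp Ψ y - y) (Z 0 - δ₀)) := ⟨hright, hleft⟩
    obtain ⟨u, hu, hval⟩ := hivt hmem
    exact ⟨u, hu, hval⟩
  have hufix' : wordComp Ψ u = u := by
    have := sub_eq_zero.mp hufix
    linarith [this]
  have huZ : |u - Z 0| ≤ δ₀ := by
    rcases huI with ⟨h1, h2⟩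
    rw [abs_le]
    constructor <;> linarith
  have hderiv_u : deriv (wordComp Ψ) u = ∏ s ∈ Finset.range r, deriv (F s) (orb F u s) :=
    (hΨderiv u).deriv
  have hprod_lt : ∏ s ∈ Finset.range r, deriv (F s) (orb F u s) < 1 := by
    have hYt : ∀ s, s < r → |orb F u s - Z s| ≤ δ := by
      intro s hs
      exact le_trans (le_trans (claim u huZ s hs.le) (hcomb' s hs.le)) hδ₀δ
    calc ∏ s ∈ Finset.range r, deriv (F s) (orb F u s)
        ≤ ∏ s ∈ Finset.range r, (deriv (F s) (Z s) * Real.exp (lam/100)) := by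
          apply Finset.prod_le_prod
          · intro s hs; exact (hpos _ (hFmem' s (Finset.mem_range.mp hs)) _).le
          · intro s hs
            have hs' := Finset.mem_range.mp hs
            exact hUCstep _ (hFmem' s hs') _ _ (hYt s hs')
      _ = (∏ s ∈ Finset.range r, deriv (F s) (Z s)) * Real.exp (lam/100) ^ r := by
          rw [Finset.prod_mul_distrib, Finset.prod_const, Finset.card_range]
      _ ≤ Real.exp (-((r:ℝ)*(lam/2))) * Real.exp ((r:ℝ)*(lam/100)) := by
          apply mul_le_mul (hprodZ r le_rfl) _ (by positivity) (Real.exp_pos _).le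
          rw [← Real.exp_nat_mul]
      _ = Real.exp ((r:ℝ)*(lam/100) - (r:ℝ)*(lam/2)) := by
          rw [← Real.exp_add]
          ring_nf
      _ < 1 := by
          rw [Real.exp_lt_one_iff]
          have hr1' : (1:ℝ) ≤ (r:ℝ) := by exact_mod_cast hr1
          nlinarith [hlam0]
  exact hnofix ⟨Ψ, u, hΨword, hufix', by rw [hderiv_u]; exact hprod_lt⟩
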